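/- (Discrete Sobolev embedding for sets.) Let 0<s<1/2. There exists a constant C_s>0 depending only on s such that for every nonempty finite set E⊂ℤ and every k∈E: Σ_{l∈ℤ∖E} 1/|k−l|^{1+2s} ≥ C_s·(#E)^{−2s}, where #E is the number of elements of E. -/
import Mathlib


/-- Discrete Sobolev embedding for sets: for any nonempty finite `E ⊂ ℤ` and any `k ∈ E`,
`Σ_{l ∉ E} 1/|k-l|^{1+2s} ≥ C_s (#E)^{-2s}`. -/
theorem discrete_Sobolev_embedding_for_sets (s : ℝ) (hs0 : 0 < s) (hs1 : s < 1/2) :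
    ∃ C : ℝ, 0 < C ∧ ∀ E : Finset ℤ, E.Nonempty → ∀ k ∈ E,
      C * (E.card : ℝ) ^ (-(2 * s)) ≤
        ∑' l : {l : ℤ // l ∉ E}, 1 / |(k : ℝ) - ((l : ℤ) : ℝ)| ^ (1 + 2 * s) := by
  refine ⟨(2:ℝ) ^ (-(1 + 2*s)), Real.rpow_pos_of_pos two_pos _, ?_⟩
  intro E hE k hk
  set n : ℕ := E.card with hn
  have hn1 : 1 ≤ n := Finset.card_pos.mpr hE
  have hnR : (0:ℝ) < n := by exact_mod_cast hn1
  set g : ℤ → ℝ := fun l => |(k:ℝ) - l| ^ (-(1 + 2*s)) with hg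
  have hgnonneg : ∀ l, 0 ≤ g l := fun l => Real.rpow_nonneg (abs_nonneg _) _
  -- summability
  have hsumg : Summable g := by
    have h1 : Summable (fun m : ℤ => |(m:ℝ)| ^ (-(1+2*s))) :=
      Real.summable_abs_int_rpow (by linarith)
    have h2 := (Equiv.subLeft k).summable_iff.mpr h1
    refine h2.congr fun l => ?_
    simp [g, Equiv.subLeft]
  -- the function on the subtype equals g
  have hfun : (fun l : {l : ℤ // l ∉ E} => 1 / |(k : ℝ) - ((l : ℤ) : ℝ)| ^ (1 + 2 * s)) =
      fun l : {l : ℤ // l ∉ E} => g (l : ℤ) := by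
    funext l
    simp only [hg]
    rw [Real.rpow_neg (abs_nonneg _), one_div]
  rw [hfun]
  -- rewrite tsum over subtype as tsum of indicator
  have htsum : ∑' l : {l : ℤ // l ∉ E}, g (l : ℤ)
      = ∑' l : ℤ, Set.indicator ((↑E : Set ℤ)ᶜ) g l :=
    tsum_subtype ((↑E : Set ℤ)ᶜ) g
  rw [htsum]
  have hindsum : Summable (Set.indicator ((↑E : Set ℤ)ᶜ) g) := hsumg.indicator _
  -- the annulus
  set m : ℤ := (n : ℤ) with hm
  have hm1 : 1 ≤ m := by omega
  set A : Finset ℤ := Finset.Icc (k + m + 1) (k + 2*m) with hA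
  set B : Finset ℤ := Finset.Icc (k - 2*m) (k - m - 1) with hB
  have hAB : Disjoint A B := by
    rw [Finset.disjoint_left]
    intro l hl hl'
    simp only [hA, hB, Finset.mem_Icc] at hl hl'
    omega
  have hcardA : A.card = n := by
    rw [hA, Int.card_Icc]; omega
  have hcardB : B.card = n := by
    rw [hB, Int.card_Icc]; omega
  set F : Finset ℤ := (A ∪ B) \ E with hF
  have hcardF : n ≤ F.card := by
    have h1 : (A ∪ B).card ≤ F.card + E.card := Finset.card_le_card_sdiff_add_card
    have h2 : (A ∪ B).card = 2 * n := by
      rw [Finset.card_union_of_disjoint hAB, hcardA, hcardB]; ring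
    omega
  -- terms in F are bounded below
  set b : ℝ := (2 * (n:ℝ)) ^ (-(1 + 2*s)) with hb
  have hbnonneg : 0 ≤ b := Real.rpow_nonneg (by positivity) _
  have hterm : ∀ l ∈ F, b ≤ Set.indicator ((↑E : Set ℤ)ᶜ) g l := by
    intro l hl
    have hlE : l ∉ E := (Finset.mem_sdiff.mp hl).2
    have hlAB := (Finset.mem_sdiff.mp hl).1
    have hrange : (k + m + 1 ≤ l ∧ l ≤ k + 2*m) ∨ (k - 2*m ≤ l ∧ l ≤ k - m - 1) := by
      rcases Finset.mem_union.mp hlAB with h | h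
      · exact Or.inl (Finset.mem_Icc.mp h)
      · exact Or.inr (Finset.mem_Icc.mp h)
    have habs : |k - l| ≤ 2 * m ∧ 1 ≤ |k - l| := by
      constructor <;> [rw [abs_le]; rw [le_abs]] <;> omega
    rw [Set.indicator_of_mem (by simpa using hlE)]
    have hpos : (0:ℝ) < |(k:ℝ) - l| := by
      have hkl : k ≠ l := by omega
      have hne : (k:ℝ) - l ≠ 0 := sub_ne_zero.mpr (by exact_mod_cast hkl)
      exact abs_pos.mpr hne
    have hle : |(k:ℝ) - l| ≤ 2 * (n:ℝ) := by
      have : |((k - l : ℤ) : ℝ)| ≤ ((2 * m : ℤ) : ℝ) := by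
        exact_mod_cast habs.1
      push_cast [hm] at this ⊢
      linarith
    exact Real.rpow_le_rpow_of_nonpos hpos hle (by linarith)
  -- chain of inequalities
  have hsum_ge : (n : ℝ) * b ≤ ∑' l : ℤ, Set.indicator ((↑E : Set ℤ)ᶜ) g l := by
    calc (n : ℝ) * b ≤ (F.card : ℝ) * b := by
          apply mul_le_mul_of_nonneg_right _ hbnonneg
          exact_mod_cast hcardF
      _ ≤ ∑ l ∈ F, Set.indicator ((↑E : Set ℤ)ᶜ) g l := by
          have := Finset.card_nsmul_le_sum F _ b hterm
          simpa [nsmul_eq_mul] using this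
      _ ≤ ∑' l : ℤ, Set.indicator ((↑E : Set ℤ)ᶜ) g l := by
          apply Summable.sum_le_tsum F (fun i _ => Set.indicator_nonneg (fun l _ => hgnonneg l) i) hindsum
  refine le_trans (le_of_eq ?_) hsum_ge
  -- C * n^{-2s} = n * (2n)^{-(1+2s)}
  rw [hb, Real.mul_rpow (by norm_num) (le_of_lt hnR)]
  rw [show (n:ℝ) * ((2:ℝ) ^ (-(1 + 2*s)) * (n:ℝ) ^ (-(1 + 2*s)))
      = (2:ℝ) ^ (-(1 + 2*s)) * ((n:ℝ) ^ (1:ℝ) * (n:ℝ) ^ (-(1 + 2*s))) by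
    rw [Real.rpow_one]; ring]
  rw [← Real.rpow_add hnR]
  ring_nf
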